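/- Equality of exponential spaces along the maximal exponential model: if U ∈ L^{cosh−1}(M) has E_M[U] = 0 and E_M[e^{αU}] < ∞ for some α > 1 as well as E_M[e^{−αU}] < ∞ (i.e. U is in the interior of the domain of the cumulant functional), and f = e^{U − K_M(U)} with K_M(U) = log E_M[e^U], then L^{cosh−1}(f·M) = L^{cosh−1}(M) as sets: a measurable V satisfies ∫(cosh−1)(αV) f M dx < ∞ for some α > 0 iff ∫(cosh−1)(α'V) M dx < ∞ for some α' > 0. -/

import Mathlib

open Real MeasureTheory
open scoped ENNReal

noncomputable section

/-- The standard `n`-dimensional Gaussian density. -/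
def gaussM (n : ℕ) (x : EuclideanSpace ℝ (Fin n)) : ℝ :=
  (2 * π) ^ (-(n : ℝ) / 2) * exp (-‖x‖ ^ 2 / 2)

/-- The standard Gaussian measure `M(x)dx` on `ℝⁿ`. -/
def gaussMeasure (n : ℕ) : Measure (EuclideanSpace ℝ (Fin n)) :=
  volume.withDensity fun x => ENNReal.ofReal (gaussM n x)

/-- Luxemburg norm for the Young function `Φ` with respect to a measure `μ`. -/
def luxNorm {E : Type*} [MeasurableSpace E] (Φ : ℝ → ℝ) (μ : Measure E)
    (g : E → ℝ) : ℝ :=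
  sInf {ρ : ℝ | 0 < ρ ∧ ∫ x, Φ (g x / ρ) ∂μ ≤ 1 ∧
    Integrable (fun x => Φ (g x / ρ)) μ}

/-- `exp |x| ≤ 2 cosh x`. -/
lemma exp_abs_le_two_cosh (x : ℝ) : exp |x| ≤ 2 * cosh x := by
  rw [Real.cosh_eq]
  rcases abs_cases x with ⟨h, _⟩ | ⟨h, _⟩ <;> rw [h] <;>
    nlinarith [exp_pos x, exp_pos (-x)]

/-- `cosh x ≤ exp |x|`. -/
lemma cosh_le_exp_abs (x : ℝ) : cosh x ≤ exp |x| := by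
  rw [Real.cosh_eq]
  rcases le_total 0 x with h | h
  · rw [abs_of_nonneg h]
    nlinarith [exp_le_exp.2 (neg_le_self h), exp_pos x]
  · rw [abs_of_nonpos h]
    nlinarith [exp_le_exp.2 (le_neg_self_iff.2 h), exp_pos (-x)]

/-- `(cosh x)^q ≤ 2 cosh (q x)` for `q ≥ 0`. -/
lemma cosh_rpow_le (q : ℝ) (hq : 0 ≤ q) (x : ℝ) :
    cosh x ^ q ≤ 2 * cosh (q * x) := by
  calc cosh x ^ q ≤ exp |x| ^ q :=
        Real.rpow_le_rpow (cosh_pos x).le (cosh_le_exp_abs x) hq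
    _ = exp (|x| * q) := (Real.exp_mul _ _).symm
    _ = exp |q * x| := by rw [abs_mul, abs_of_nonneg hq, mul_comm]
    _ ≤ 2 * cosh (q * x) := exp_abs_le_two_cosh _

/-- The Gaussian measure is finite. -/
lemma gaussMeasure_isFiniteMeasure (n : ℕ) : IsFiniteMeasure (gaussMeasure n) := by
  have h0 : Integrable (fun v : EuclideanSpace ℝ (Fin n) =>
      Complex.exp (-(1/2 : ℂ) * (‖v‖ : ℂ)^2 +
        (0 : ℂ) * ((inner ℝ (0 : EuclideanSpace ℝ (Fin n)) v : ℝ) : ℂ))) :=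
    GaussianFourier.integrable_cexp_neg_mul_sq_norm_add (by norm_num) 0 0
  have h1 : Integrable (fun v : EuclideanSpace ℝ (Fin n) => exp (-‖v‖ ^ 2 / 2)) := by
    have := h0.norm
    refine this.congr ?_
    filter_upwards with v
    rw [zero_mul, add_zero, Complex.norm_exp, ← Complex.ofReal_pow]
    congr 1
    simp [Complex.mul_re, Complex.ofReal_re, Complex.ofReal_im, ← Complex.ofReal_pow]
    ring
  have h2 : Integrable (gaussM n) := by
    unfold gaussM
    exact h1.const_mul _
  exact isFiniteMeasure_withDensity_ofReal h2.hasFiniteIntegral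

theorem exponential_spaces_equal {n : ℕ}
    (U : EuclideanSpace ℝ (Fin n) → ℝ) (hU : Measurable U)
    (hzero : ∫ x, U x ∂(gaussMeasure n) = 0)
    (α : ℝ) (hα : 1 < α)
    (hp : Integrable (fun x => exp (α * U x)) (gaussMeasure n))
    (hq : Integrable (fun x => exp (-α * U x)) (gaussMeasure n))
    (f : EuclideanSpace ℝ (Fin n) → ℝ)
    (hf : f = fun x => exp (U x - log (∫ y, exp (U y) ∂(gaussMeasure n))))
    (V : EuclideanSpace ℝ (Fin n) → ℝ) (hV : Measurable V) :
    (∃ a : ℝ, 0 < a ∧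
        Integrable (fun x => cosh (a * V x) - 1)
          ((gaussMeasure n).withDensity fun x => ENNReal.ofReal (f x))) ↔
      (∃ a : ℝ, 0 < a ∧
        Integrable (fun x => cosh (a * V x) - 1) (gaussMeasure n)) := by
  haveI := gaussMeasure_isFiniteMeasure n
  set μ := gaussMeasure n with hμ
  set K := log (∫ y, exp (U y) ∂μ) with hK
  have hfx : ∀ x, f x = exp (U x - K) := fun x => by rw [hf]
  have hfpos : ∀ x, 0 < f x := fun x => by rw [hfx]; exact exp_pos _
  have hfm : Measurable f := by
    rw [hf]; exact (hU.sub measurable_const).exp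
  -- integrability of exp (t * U) for |t| ≤ α
  have hexp : ∀ t : ℝ, |t| ≤ α → Integrable (fun x => exp (t * U x)) μ := by
    intro t ht
    refine (hp.add hq).mono' (Real.measurable_exp.comp (hU.const_mul t)).aestronglyMeasurable
      (Filter.Eventually.of_forall fun x => ?_)
    rw [Real.norm_eq_abs, abs_of_pos (exp_pos _)]
    obtain ⟨ht1, ht2⟩ := abs_le.1 ht
    rcases le_total 0 (U x) with h | h
    · have : t * U x ≤ α * U x := by nlinarith
      calc exp (t * U x) ≤ exp (α * U x) := exp_le_exp.2 this
        _ ≤ _ := le_add_of_nonneg_right (exp_pos _).le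
    · have : t * U x ≤ -α * U x := by nlinarith
      calc exp (t * U x) ≤ exp (-α * U x) := exp_le_exp.2 this
        _ ≤ _ := le_add_of_nonneg_left (exp_pos _).le
  -- rpow of f
  have hfr : ∀ s : ℝ, ∀ x, f x ^ s = exp (-(s * K)) * exp (s * U x) := by
    intro s x
    rw [hfx, Real.rpow_def_of_pos (exp_pos _), Real.log_exp, ← Real.exp_add]
    congr 1; ring
  have hfrint : ∀ s : ℝ, |s| ≤ α → Integrable (fun x => f x ^ s) μ := by
    intro s hs
    have := (hexp s hs).const_mul (exp (-(s * K)))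
    refine this.congr (Filter.Eventually.of_forall fun x => ?_)
    exact (hfr s x).symm
  have hfint : Integrable f μ := by
    have := hfrint 1 (by rw [abs_one]; linarith)
    refine this.congr (Filter.Eventually.of_forall fun x => ?_)
    exact Real.rpow_one _
  have hfα : Integrable (fun x => f x ^ α) μ := hfrint α (by rw [abs_of_pos (by linarith)])
  have hf1α : Integrable (fun x => f x ^ (1 - α)) μ := by
    refine hfrint (1 - α) ?_
    rw [abs_of_nonpos (by linarith)]; linarith
  -- conjugate exponent
  set q := Real.conjExponent α with hqdef
  have hpq : α.HolderConjugate q := Real.HolderConjugate.conjExponent hα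
  have hq1 : 1 < q := hpq.symm.lt
  have hq0 : 0 < q := hpq.symm.pos
  -- withDensity transfer
  have hWD : ∀ g : EuclideanSpace ℝ (Fin n) → ℝ,
      Integrable g (μ.withDensity fun x => ENNReal.ofReal (f x)) ↔
        Integrable (fun x => g x * f x) μ := by
    intro g
    rw [integrable_withDensity_iff hfm.ennreal_ofReal
      (Filter.Eventually.of_forall fun x => ENNReal.ofReal_lt_top)]
    constructor <;> intro h <;> refine h.congr (Filter.Eventually.of_forall fun x => ?_) <;>
      simp only [ENNReal.toReal_ofReal (hfpos x).le]
  -- the cosh power bound, specialized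
  have hcosh : ∀ a : ℝ, ∀ x, cosh (a / q * V x) ^ q ≤ 2 * cosh (a * V x) := by
    intro a x
    have := cosh_rpow_le q hq0.le (a / q * V x)
    rwa [show q * (a / q * V x) = a * V x by field_simp] at this
  constructor
  · -- from f·M to M
    rintro ⟨a, ha, hint⟩
    rw [hWD] at hint
    refine ⟨a / q, div_pos ha hq0, ?_⟩
    refine Integrable.mono' (g := fun x => f x ^ (1 - α) / α +
        (2 / q) * ((cosh (a * V x) - 1) * f x) + (2 / q) * f x)
      (((hf1α.div_const α).add (hint.const_mul (2 / q))).add (hfint.const_mul (2 / q)))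
      (((hV.const_mul _).cosh.sub measurable_const).aestronglyMeasurable)
      (Filter.Eventually.of_forall fun x => ?_)
    rw [Real.norm_eq_abs, abs_of_nonneg (by linarith [one_le_cosh (a / q * V x)])]
    have hY : (f x)⁻¹ * cosh (a / q * V x) ≤
        (f x)⁻¹ ^ α / α + cosh (a / q * V x) ^ q / q :=
      Real.young_inequality_of_nonneg (inv_nonneg.2 (hfpos x).le) (cosh_pos _).le hpq
    have key : (f x)⁻¹ ^ α * f x = f x ^ (1 - α) := by
      rw [Real.inv_rpow (hfpos x).le, Real.rpow_sub (hfpos x), Real.rpow_one]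
      field_simp
    calc cosh (a / q * V x) - 1 ≤ cosh (a / q * V x) := by
          linarith [one_le_cosh (a / q * V x)]
      _ = ((f x)⁻¹ * cosh (a / q * V x)) * f x := by
          rw [mul_comm ((f x)⁻¹) _, mul_assoc, inv_mul_cancel₀ (hfpos x).ne', mul_one]
      _ ≤ ((f x)⁻¹ ^ α / α + cosh (a / q * V x) ^ q / q) * f x :=
          mul_le_mul_of_nonneg_right hY (hfpos x).le
      _ = (f x)⁻¹ ^ α * f x / α + cosh (a / q * V x) ^ q * f x / q := by ring
      _ = f x ^ (1 - α) / α + cosh (a / q * V x) ^ q * f x / q := by rw [key]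
      _ ≤ f x ^ (1 - α) / α + (2 * cosh (a * V x)) * f x / q := by
          gcongr <;> first
            | exact (hfpos x).le
            | exact hcosh a x
      _ = f x ^ (1 - α) / α + (2 / q) * ((cosh (a * V x) - 1) * f x) + (2 / q) * f x := by
          ring
  · -- from M to f·M
    rintro ⟨a, ha, hint⟩
    refine ⟨a / q, div_pos ha hq0, ?_⟩
    rw [hWD]
    refine Integrable.mono' (g := fun x => f x ^ α / α +
        (2 / q) * (cosh (a * V x) - 1) + 2 / q)
      (((hfα.div_const α).add (hint.const_mul (2 / q))).add (integrable_const _))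
      ((((hV.const_mul _).cosh.sub measurable_const).mul hfm).aestronglyMeasurable)
      (Filter.Eventually.of_forall fun x => ?_)
    rw [Real.norm_eq_abs, abs_of_nonneg
      (mul_nonneg (by linarith [one_le_cosh (a / q * V x)]) (hfpos x).le)]
    have hY : f x * cosh (a / q * V x) ≤
        f x ^ α / α + cosh (a / q * V x) ^ q / q :=
      Real.young_inequality_of_nonneg (hfpos x).le (cosh_pos _).le hpq
    calc (cosh (a / q * V x) - 1) * f x ≤ cosh (a / q * V x) * f x := by
          have := one_le_cosh (a / q * V x)
          nlinarith [hfpos x]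
      _ = f x * cosh (a / q * V x) := mul_comm _ _
      _ ≤ f x ^ α / α + cosh (a / q * V x) ^ q / q := hY
      _ ≤ f x ^ α / α + (2 * cosh (a * V x)) / q := by
          gcongr
          exact hcosh a x
      _ = f x ^ α / α + (2 / q) * (cosh (a * V x) - 1) + 2 / q := by ring
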